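/- For the supersymmetric model on an open chain of length L = 3n + a with a ∈ {-1,0,1}, the cohomology of Q is nonzero only when a ∈ {0,-1}, in which case it is one-dimensional and concentrated at fermion number n; for a = 1 the cohomology vanishes in all degrees. -/

import Mathlib

open Finset Matrix

attribute [local instance] Classical.propDecidable

/-- A hard-core fermion configuration: an independent set of the graph `G`. -/
def IndepIn {V : Type*} (G : SimpleGraph V) (S : Finset V) : Prop :=
  ∀ u ∈ S, ∀ v ∈ S, ¬ G.Adj u v

/-- The matrix of the supercharge `Q` restricted to the sector with `f` particles,
mapping it to the sector with `f+1` particles, in the orthonormal basis of independent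
sets, with fermionic signs determined by the site-ordering `ι`. -/
noncomputable def QMatGr {V : Type*} [Fintype V] [DecidableEq V]
    (G : SimpleGraph V) (ι : V → ℕ) (f : ℕ) :
    Matrix {S : Finset V // IndepIn G S ∧ S.card = f + 1}
      {S : Finset V // IndepIn G S ∧ S.card = f} ℂ :=
  fun T S =>
    if S.1 ⊆ T.1 then
      (-1 : ℂ) ^ ((S.1.filter (fun w => ∃ v ∈ T.1 \ S.1, ι w < ι v)).card)
    else 0

/-- The supercharge as a linear map from the `f`-particle sector to the
`(f+1)`-particle sector. -/
noncomputable def Qgr {V : Type*} [Fintype V] [DecidableEq V]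
    (G : SimpleGraph V) (ι : V → ℕ) (f : ℕ) :
    ({S : Finset V // IndepIn G S ∧ S.card = f} → ℂ) →ₗ[ℂ]
      ({S : Finset V // IndepIn G S ∧ S.card = f + 1} → ℂ) :=
  Matrix.toLin' (QMatGr G ι f)

/-- The dimension of the cohomology `ker Q / im Q` of the supercharge at fermion
number `f`. -/
noncomputable def cohDim {V : Type*} [Fintype V] [DecidableEq V]
    (G : SimpleGraph V) (ι : V → ℕ) : ℕ → ℕ
  | 0 => Module.finrank ℂ (LinearMap.ker (Qgr G ι 0))
  | (f + 1) => Module.finrank ℂ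
      (↥(LinearMap.ker (Qgr G ι (f + 1))) ⧸
        Submodule.comap (LinearMap.ker (Qgr G ι (f + 1))).subtype
          (LinearMap.range (Qgr G ι f)))

/-- The open chain of length `L`: vertices `{0,…,L-1}`, with `u ~ v` iff consecutive. -/
def openChain (L : ℕ) : SimpleGraph (Fin L) :=
  SimpleGraph.fromRel (fun u v => u.val + 1 = v.val)

set_option maxHeartbeats 1000000
set_option synthInstance.maxHeartbeats 400000

namespace OCproof

abbrev TT (L f : ℕ) := {S : Finset (Fin L) // IndepIn (openChain L) S ∧ S.card = f}

noncomputable def QM (L f : ℕ) : Matrix (TT L (f+1)) (TT L f) ℂ := QMatGr (openChain L) Fin.val f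

lemma Qgr_eq (L f : ℕ) : Qgr (openChain L) Fin.val f = Matrix.toLin' (QM L f) := rfl

lemma adj_iff {L : ℕ} {u v : Fin L} :
    (openChain L).Adj u v ↔ (u:ℕ) + 1 = (v:ℕ) ∨ (v:ℕ) + 1 = (u:ℕ) := by
  constructor
  · rintro ⟨-, h⟩; exact h
  · intro h
    refine ⟨?_, h⟩
    intro he
    rw [he] at h
    omega

lemma indep_mono {L : ℕ} {S T : Finset (Fin L)} (h : S ⊆ T)
    (hT : IndepIn (openChain L) T) : IndepIn (openChain L) S :=
  fun u hu v hv => hT u (h hu) v (h hv)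

noncomputable def sgn {L : ℕ} (S : Finset (Fin L)) (v : Fin L) : ℂ :=
  (-1) ^ ((S.filter fun w => Fin.val w < Fin.val v).card)

lemma sgn_sq {L : ℕ} (S : Finset (Fin L)) (v : Fin L) : sgn S v * sgn S v = 1 := by
  rw [sgn, ← pow_add]
  exact Even.neg_one_pow ⟨_, rfl⟩

lemma Q_entry_insert {L f : ℕ} (T : TT L (f+1)) (S : TT L f) {v : Fin L}
    (hv : v ∉ S.1) (hT : T.1 = insert v S.1) : QM L f T S = sgn S.1 v := by
  have hsub : S.1 ⊆ T.1 := by rw [hT]; exact Finset.subset_insert _ _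
  have hsd : T.1 \ S.1 = {v} := by
    rw [hT]
    exact Finset.insert_sdiff_cancel hv
  have hfilt : (S.1.filter (fun w => ∃ x ∈ T.1 \ S.1, Fin.val w < Fin.val x))
      = S.1.filter (fun w => Fin.val w < Fin.val v) := by
    apply Finset.filter_congr
    intro w _
    simp [hsd]
  rw [QM, QMatGr, if_pos hsub, sgn]
  congr 2
  ext w
  simp [hsd]

lemma Q_entry_zero {L f : ℕ} (T : TT L (f+1)) (S : TT L f)
    (h : ¬ S.1 ⊆ T.1) : QM L f T S = 0 := by
  rw [QM, QMatGr, if_neg h]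

lemma exists_insert_of_sub {L f : ℕ} (T : TT L (f+1)) (S : TT L f)
    (h : S.1 ⊆ T.1) : ∃ v, v ∉ S.1 ∧ T.1 = insert v S.1 := by
  have hc : (T.1 \ S.1).card = 1 := by
    rw [Finset.card_sdiff_of_subset h, T.2.2, S.2.2]
    omega
  obtain ⟨v, hv⟩ := Finset.card_eq_one.mp hc
  refine ⟨v, ?_, ?_⟩
  · intro hvS
    have : v ∈ T.1 \ S.1 := hv ▸ Finset.mem_singleton_self v
    exact (Finset.mem_sdiff.mp this).2 hvS
  · ext x
    constructor
    · intro hx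
      by_cases hxS : x ∈ S.1
      · exact Finset.mem_insert_of_mem hxS
      · have : x ∈ T.1 \ S.1 := Finset.mem_sdiff.mpr ⟨hx, hxS⟩
        rw [hv, Finset.mem_singleton] at this
        rw [this]
        exact Finset.mem_insert_self _ _
    · intro hx
      rcases Finset.mem_insert.mp hx with hxv | hx
      · have hm : v ∈ T.1 \ S.1 := hv ▸ Finset.mem_singleton_self v
        rw [hxv]
        exact (Finset.mem_sdiff.mp hm).1
      · exact h hx

lemma sgn_insert {L : ℕ} {S : Finset (Fin L)} {v w : Fin L} (hv : v ∉ S) :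
    sgn (insert v S) w = (if Fin.val v < Fin.val w then (-1:ℂ) else 1) * sgn S w := by
  rw [sgn, sgn, Finset.filter_insert]
  by_cases h : Fin.val v < Fin.val w
  · rw [if_pos h, if_pos h,
      Finset.card_insert_of_notMem (fun hc => hv (Finset.mem_filter.mp hc).1), pow_succ]
    ring
  · rw [if_neg h, if_neg h, one_mul]

lemma sgn_anticomm {L : ℕ} {S : Finset (Fin L)} {v w : Fin L}
    (hv : v ∉ S) (hw : w ∉ S) (hvw : v ≠ w) :
    sgn (insert v S) w * sgn S v + sgn (insert w S) v * sgn S w = 0 := by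
  rw [sgn_insert hv, sgn_insert hw]
  have hvw' : Fin.val v ≠ Fin.val w := fun h => hvw (Fin.ext h)
  rcases lt_or_gt_of_ne hvw' with h | h
  · rw [if_pos h, if_neg (by omega)]
    ring
  · rw [if_neg (by omega), if_pos h]
    ring

lemma QQ_zero (L f : ℕ) : QM L (f+1) * QM L f = 0 := by
  ext T S
  rw [Matrix.mul_apply, Matrix.zero_apply]
  by_cases hST : S.1 ⊆ T.1
  · have hc2 : (T.1 \ S.1).card = 2 := by
      rw [Finset.card_sdiff_of_subset hST, T.2.2, S.2.2]
      omega
    obtain ⟨v, w, hvw, hset⟩ := Finset.card_eq_two.mp hc2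
    have hvm : v ∈ T.1 \ S.1 := by rw [hset]; simp
    have hwm : w ∈ T.1 \ S.1 := by rw [hset]; simp
    have hvT : v ∈ T.1 := (Finset.mem_sdiff.mp hvm).1
    have hwT : w ∈ T.1 := (Finset.mem_sdiff.mp hwm).1
    have hvS : v ∉ S.1 := (Finset.mem_sdiff.mp hvm).2
    have hwS : w ∉ S.1 := (Finset.mem_sdiff.mp hwm).2
    have hT : T.1 = S.1 ∪ {v, w} := by
      rw [← Finset.union_sdiff_of_subset hST, hset]
    have hTv : T.1 = insert w (insert v S.1) := by
      rw [hT]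
      ext x
      simp [Finset.mem_insert, Finset.mem_union]
      tauto
    have hTw : T.1 = insert v (insert w S.1) := by
      rw [hT]
      ext x
      simp [Finset.mem_insert, Finset.mem_union]
    have hsub1 : insert v S.1 ⊆ T.1 := Finset.insert_subset hvT hST
    have hsub2 : insert w S.1 ⊆ T.1 := Finset.insert_subset hwT hST
    have hR1mem : IndepIn (openChain L) (insert v S.1) ∧ (insert v S.1).card = f + 1 :=
      ⟨indep_mono hsub1 T.2.1, by rw [Finset.card_insert_of_notMem hvS, S.2.2]⟩
    have hR2mem : IndepIn (openChain L) (insert w S.1) ∧ (insert w S.1).card = f + 1 :=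
      ⟨indep_mono hsub2 T.2.1, by rw [Finset.card_insert_of_notMem hwS, S.2.2]⟩
    have hR12 : (⟨insert v S.1, hR1mem⟩ : TT L (f+1)) ≠ ⟨insert w S.1, hR2mem⟩ := by
      intro h
      have h2 : insert v S.1 = insert w S.1 := congrArg Subtype.val h
      have : v ∈ insert w S.1 := h2 ▸ Finset.mem_insert_self v S.1
      rcases Finset.mem_insert.mp this with h3 | h3
      · exact hvw h3
      · exact hvS h3
    have hvanish : ∀ R ∈ Finset.univ, R ∉ ({⟨insert v S.1, hR1mem⟩, ⟨insert w S.1, hR2mem⟩} :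
        Finset (TT L (f+1))) → QM L (f + 1) T R * QM L f R S = 0 := by
      intro R _ hR
      by_cases h1 : S.1 ⊆ R.1
      · by_cases h2 : R.1 ⊆ T.1
        · obtain ⟨x, hxS, hRx⟩ := exists_insert_of_sub R S h1
          have hxT : x ∈ T.1 := h2 (hRx ▸ Finset.mem_insert_self x S.1)
          have : x ∈ T.1 \ S.1 := Finset.mem_sdiff.mpr ⟨hxT, hxS⟩
          rw [hset, Finset.mem_insert, Finset.mem_singleton] at this
          exfalso
          apply hR
          rw [Finset.mem_insert, Finset.mem_singleton]
          rcases this with h3 | h3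
          · left; apply Subtype.ext; rw [hRx, h3]
          · right; apply Subtype.ext; rw [hRx, h3]
        · rw [Q_entry_zero T R h2, zero_mul]
      · rw [Q_entry_zero R S h1, mul_zero]
    rw [← Finset.sum_subset (Finset.subset_univ _) hvanish,
      Finset.sum_pair hR12]
    have e1 : QM L (f+1) T ⟨insert v S.1, hR1mem⟩ = sgn (insert v S.1) w :=
      Q_entry_insert _ _ (by
        intro hc
        rcases Finset.mem_insert.mp hc with h3 | h3
        · exact hvw h3.symm
        · exact hwS h3) hTv
    have e2 : QM L f ⟨insert v S.1, hR1mem⟩ S = sgn S.1 v := Q_entry_insert _ _ hvS rfl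
    have e3 : QM L (f+1) T ⟨insert w S.1, hR2mem⟩ = sgn (insert w S.1) v :=
      Q_entry_insert _ _ (by
        intro hc
        rcases Finset.mem_insert.mp hc with h3 | h3
        · exact hvw h3
        · exact hvS h3) hTw
    have e4 : QM L f ⟨insert w S.1, hR2mem⟩ S = sgn S.1 w := Q_entry_insert _ _ hwS rfl
    rw [e1, e2, e3, e4]
    exact sgn_anticomm hvS hwS hvw
  · apply Finset.sum_eq_zero
    intro R _
    by_cases h1 : S.1 ⊆ R.1
    · by_cases h2 : R.1 ⊆ T.1
      · exact absurd (h1.trans h2) hST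
      · rw [Q_entry_zero T R h2, zero_mul]
    · rw [Q_entry_zero R S h1, mul_zero]

lemma range_le_ker (L f : ℕ) :
    LinearMap.range (Qgr (openChain L) Fin.val f) ≤
      LinearMap.ker (Qgr (openChain L) Fin.val (f+1)) := by
  rw [LinearMap.range_le_ker_iff, Qgr_eq, Qgr_eq, ← Matrix.toLin'_mul, QQ_zero]
  simp

lemma cohDim_succ_add (L f : ℕ) :
    cohDim (openChain L) Fin.val (f+1)
      + Module.finrank ℂ (LinearMap.range (Qgr (openChain L) Fin.val f))
    = Module.finrank ℂ (LinearMap.ker (Qgr (openChain L) Fin.val (f+1))) := by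
  have hle := range_le_ker L f
  have h0 : cohDim (openChain L) Fin.val (f+1) = Module.finrank ℂ
      (↥(LinearMap.ker (Qgr (openChain L) Fin.val (f + 1))) ⧸
        Submodule.comap (LinearMap.ker (Qgr (openChain L) Fin.val (f + 1))).subtype
          (LinearMap.range (Qgr (openChain L) Fin.val f))) := rfl
  have e : Module.finrank ℂ
      (Submodule.comap (LinearMap.ker (Qgr (openChain L) Fin.val (f + 1))).subtype
          (LinearMap.range (Qgr (openChain L) Fin.val f)))
      = Module.finrank ℂ (LinearMap.range (Qgr (openChain L) Fin.val f)) :=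
    (Submodule.comapSubtypeEquivOfLe hle).finrank_eq
  have h2 := Submodule.finrank_quotient_add_finrank
    (Submodule.comap (LinearMap.ker (Qgr (openChain L) Fin.val (f + 1))).subtype
          (LinearMap.range (Qgr (openChain L) Fin.val f)))
  rw [e] at h2
  rw [h0]
  exact h2

lemma cohDim_zero_eq (L : ℕ) :
    cohDim (openChain L) Fin.val 0
      = Module.finrank ℂ (LinearMap.ker (Qgr (openChain L) Fin.val 0)) := rfl

end OCproof

namespace OCproof

lemma indep_iff_val {L : ℕ} {S : Finset (Fin L)} :
    IndepIn (openChain L) S ↔ ∀ u ∈ S, ∀ v ∈ S, (u:ℕ) + 1 ≠ (v:ℕ) := by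
  constructor
  · intro h u hu v hv he
    exact h u hu v hv (adj_iff.mpr (Or.inl he))
  · intro h u hu v hv hadj
    rcases adj_iff.mp hadj with he | he
    · exact h u hu v hv he
    · exact h v hv u hu he

lemma indep_singleton {L : ℕ} (v : Fin L) : IndepIn (openChain L) {v} := by
  intro u hu w hw
  rw [Finset.mem_singleton] at hu hw
  subst hu; subst hw
  exact (openChain L).irrefl

lemma sgn_empty {L : ℕ} (v : Fin L) : sgn ∅ v = 1 := by
  rw [sgn, Finset.filter_empty, Finset.card_empty, pow_zero]

lemma TT_zero_eq {L : ℕ} (S : TT L 0) : S.1 = ∅ := Finset.card_eq_zero.mp S.2.2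

def tV (K : ℕ) : Fin (K+3) := ⟨K+2, by omega⟩
def sV (K : ℕ) : Fin (K+3) := ⟨K+1, by omega⟩

lemma sV_val (K : ℕ) : (sV K : ℕ) = K+1 := rfl
lemma tV_val (K : ℕ) : (tV K : ℕ) = K+2 := rfl
lemma sV_ne_tV (K : ℕ) : sV K ≠ tV K := by
  intro h
  have := congrArg Fin.val h
  simp [sV, tV] at this

def up (K : ℕ) : Fin K ↪ Fin (K+3) :=
  ⟨fun v => ⟨v.1, by omega⟩, by
    intro a b h
    simpa [Fin.ext_iff] using h⟩

lemma up_val {K : ℕ} (x : Fin K) : ((up K x : Fin (K+3)) : ℕ) = (x:ℕ) := rfl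

def mp {K : ℕ} (S : Finset (Fin K)) : Finset (Fin (K+3)) := S.map (up K)

lemma mem_mp {K : ℕ} {S : Finset (Fin K)} {y : Fin (K+3)} :
    y ∈ mp S ↔ ∃ hy : (y:ℕ) < K, (⟨y, hy⟩ : Fin K) ∈ S := by
  constructor
  · rintro h
    rw [mp, Finset.mem_map] at h
    obtain ⟨x, hx, rfl⟩ := h
    exact ⟨x.2, hx⟩
  · rintro ⟨hy, h⟩
    rw [mp, Finset.mem_map]
    exact ⟨⟨y, hy⟩, h, Fin.ext rfl⟩

lemma mem_mp_val_lt {K : ℕ} {S : Finset (Fin K)} {y : Fin (K+3)} (h : y ∈ mp S) :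
    (y:ℕ) < K := (mem_mp.mp h).1

lemma up_mem_mp {K : ℕ} {S : Finset (Fin K)} {x : Fin K} :
    up K x ∈ mp S ↔ x ∈ S := Finset.mem_map' _

lemma card_mp {K : ℕ} (S : Finset (Fin K)) : (mp S).card = S.card := Finset.card_map _

lemma mp_inj {K : ℕ} {S T : Finset (Fin K)} (h : mp S = mp T) : S = T :=
  Finset.map_injective _ h

lemma sV_not_mem_mp {K : ℕ} (S : Finset (Fin K)) : sV K ∉ mp S := by
  intro h
  have := mem_mp_val_lt h
  rw [sV_val] at this
  omega

lemma tV_not_mem_mp {K : ℕ} (S : Finset (Fin K)) : tV K ∉ mp S := by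
  intro h
  have := mem_mp_val_lt h
  rw [tV_val] at this
  omega

lemma indep_mp {K : ℕ} {S : Finset (Fin K)} (h : IndepIn (openChain K) S) :
    IndepIn (openChain (K+3)) (mp S) := by
  rw [indep_iff_val] at h ⊢
  intro u hu v hv
  obtain ⟨hu', hum⟩ := mem_mp.mp hu
  obtain ⟨hv', hvm⟩ := mem_mp.mp hv
  exact h _ hum _ hvm

lemma indep_insert_sV {K : ℕ} {S : Finset (Fin K)} (h : IndepIn (openChain K) S) :
    IndepIn (openChain (K+3)) (insert (sV K) (mp S)) := by
  rw [indep_iff_val]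
  have hmp := indep_iff_val.mp (indep_mp h)
  intro u hu v hv
  rcases Finset.mem_insert.mp hu with rfl | hu <;>
    rcases Finset.mem_insert.mp hv with hv' | hv'
  · rw [hv']; omega
  · have := mem_mp_val_lt hv'; rw [sV_val]; omega
  · rw [hv']; have := mem_mp_val_lt hu; rw [sV_val]; omega
  · exact hmp u hu v hv'

lemma indep_insert_tV {K : ℕ} {S : Finset (Fin K)} (h : IndepIn (openChain K) S) :
    IndepIn (openChain (K+3)) (insert (tV K) (mp S)) := by
  rw [indep_iff_val]
  have hmp := indep_iff_val.mp (indep_mp h)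
  intro u hu v hv
  rcases Finset.mem_insert.mp hu with rfl | hu <;>
    rcases Finset.mem_insert.mp hv with hv' | hv'
  · rw [hv']; omega
  · have := mem_mp_val_lt hv'; rw [tV_val]; omega
  · rw [hv']; have := mem_mp_val_lt hu; rw [tV_val]; omega
  · exact hmp u hu v hv'

/-- the upward element of the sector, with `z ∈ {sV, tV}` inserted -/
noncomputable def upS {K f : ℕ} (z : Fin (K+3)) (hz : (z:ℕ) = K+1 ∨ (z:ℕ) = K+2)
    (S' : TT K f) : TT (K+3) (f+1) :=
  ⟨insert z (mp S'.1), by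
    constructor
    · rcases hz with hz | hz
      · have : z = sV K := Fin.ext (by rw [hz, sV_val])
        rw [this]; exact indep_insert_sV S'.2.1
      · have : z = tV K := Fin.ext (by rw [hz, tV_val])
        rw [this]; exact indep_insert_tV S'.2.1
    · rw [Finset.card_insert_of_notMem (by
        intro h
        have := mem_mp_val_lt h
        omega), card_mp, S'.2.2]⟩

noncomputable def Imat (K f : ℕ) : Matrix (TT (K+3) (f+1)) (TT K f) ℂ :=
  fun S S' => if S.1 = insert (sV K) (mp S'.1) then 1 else 0

noncomputable def Pmat (K f : ℕ) : Matrix (TT K f) (TT (K+3) (f+1)) ℂ :=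
  fun S' S => if S.1 = insert (sV K) (mp S'.1) then 1
    else if S.1 = insert (tV K) (mp S'.1) then -1 else 0

noncomputable def Hmat (K f : ℕ) : Matrix (TT (K+3) f) (TT (K+3) (f+1)) ℂ :=
  fun S T => if T.1 = insert (tV K) S.1 ∧ tV K ∉ S.1 then (-1)^S.1.card else 0

lemma insert_inj' {K : ℕ} {z : Fin (K+3)} {S T : Finset (Fin K)}
    (hzS : z ∉ mp S) (hzT : z ∉ mp T)
    (h : insert z (mp S) = insert z (mp T)) : S = T := by
  apply mp_inj
  ext x
  constructor
  · intro hx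
    have : x ∈ insert z (mp T) := h ▸ Finset.mem_insert_of_mem hx
    rcases Finset.mem_insert.mp this with h3 | h3
    · exact absurd (h3 ▸ hx) hzS
    · exact h3
  · intro hx
    have : x ∈ insert z (mp S) := h.symm ▸ Finset.mem_insert_of_mem hx
    rcases Finset.mem_insert.mp this with h3 | h3
    · exact absurd (h3 ▸ hx) hzT
    · exact h3

lemma insert_sV_inj {K : ℕ} {S T : Finset (Fin K)}
    (h : insert (sV K) (mp S) = insert (sV K) (mp T)) : S = T :=
  insert_inj' (sV_not_mem_mp S) (sV_not_mem_mp T) h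

lemma insert_tV_inj {K : ℕ} {S T : Finset (Fin K)}
    (h : insert (tV K) (mp S) = insert (tV K) (mp T)) : S = T :=
  insert_inj' (tV_not_mem_mp S) (tV_not_mem_mp T) h

lemma PI_one (K f : ℕ) : Pmat K f * Imat K f = 1 := by
  ext S' T'
  rw [Matrix.mul_apply]
  set S₀ : TT (K+3) (f+1) := upS (sV K) (Or.inl (sV_val K)) T' with hS₀
  have hS₀1 : S₀.1 = insert (sV K) (mp T'.1) := rfl
  rw [Finset.sum_eq_single_of_mem S₀ (Finset.mem_univ _) (by
    intro b _ hb
    have : Imat K f b T' = 0 := by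
      rw [Imat, if_neg]
      intro hc
      exact hb (Subtype.ext (by rw [hc, hS₀1]))
    rw [this, mul_zero])]
  rw [Imat, if_pos hS₀1, mul_one, Pmat, hS₀1, Matrix.one_apply]
  by_cases h : S' = T'
  · subst h
    rw [if_pos rfl, if_pos rfl]
  · rw [if_neg (fun hc => h (Subtype.ext (insert_sV_inj hc).symm)), if_neg (by
      intro hc
      have hm : sV K ∈ insert (tV K) (mp S'.1) := hc ▸ Finset.mem_insert_self _ _
      rcases Finset.mem_insert.mp hm with h3 | h3
      · exact sV_ne_tV K h3
      · exact sV_not_mem_mp _ h3), if_neg h]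

end OCproof

namespace OCproof

lemma indep_down {K : ℕ} {S' : Finset (Fin K)}
    (h : IndepIn (openChain (K+3)) (mp S')) : IndepIn (openChain K) S' := by
  rw [indep_iff_val] at h ⊢
  intro u hu v hv
  exact h (up K u) (up_mem_mp.mpr hu) (up K v) (up_mem_mp.mpr hv)

lemma decomp {K f : ℕ} (S : TT (K+3) (f+1)) {z : Fin (K+3)} (hzval : K ≤ (z:ℕ))
    (hz : z ∈ S.1) (hother : ∀ x ∈ S.1, x ≠ z → (x:ℕ) < K) :
    ∃ S' : TT K f, S.1 = insert z (mp S'.1) := by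
  classical
  set D : Finset (Fin K) := Finset.univ.filter (fun x => up K x ∈ S.1) with hD
  have hmpD : mp D = S.1.erase z := by
    ext y
    rw [mem_mp, Finset.mem_erase]
    constructor
    · rintro ⟨hy, hmem⟩
      rw [hD, Finset.mem_filter] at hmem
      have hup : up K (⟨y, hy⟩ : Fin K) = y := Fin.ext rfl
      have hyS : y ∈ S.1 := by have h2 := hmem.2; rwa [hup] at h2
      refine ⟨?_, hyS⟩
      intro he
      rw [he] at hy
      omega
    · rintro ⟨hne, hyS⟩
      have hy : (y:ℕ) < K := hother y hyS hne
      refine ⟨hy, ?_⟩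
      rw [hD, Finset.mem_filter]
      have hup : up K (⟨y, hy⟩ : Fin K) = y := Fin.ext rfl
      exact ⟨Finset.mem_univ _, by rwa [hup]⟩
  have hS : S.1 = insert z (mp D) := by rw [hmpD, Finset.insert_erase hz]
  have hzD : z ∉ mp D := by
    intro h
    have := mem_mp_val_lt h
    omega
  have hcard : D.card = f := by
    have h1 : S.1.card = (mp D).card + 1 := by
      rw [hS, Finset.card_insert_of_notMem hzD]
    rw [S.2.2, card_mp] at h1
    omega
  exact ⟨⟨D, indep_down (indep_mono (by rw [hmpD]; exact Finset.erase_subset _ _) S.2.1),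
    hcard⟩, hS⟩

lemma decomp_sV {K f : ℕ} (S : TT (K+3) (f+1)) (hz : sV K ∈ S.1) :
    ∃ S' : TT K f, S.1 = insert (sV K) (mp S'.1) := by
  apply decomp S (by rw [sV_val]; omega) hz
  intro x hx hne
  have h1 := indep_iff_val.mp S.2.1 x hx (sV K) hz
  have h2 := indep_iff_val.mp S.2.1 (sV K) hz x hx
  rw [sV_val] at h1 h2
  have h3 : (x:ℕ) ≠ K+1 := fun he => hne (Fin.ext (by rw [he, sV_val]))
  have := x.2
  omega

lemma decomp_tV {K f : ℕ} (S : TT (K+3) (f+1)) (hz : tV K ∈ S.1)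
    (hK : ∀ x ∈ S.1, (x:ℕ) ≠ K) :
    ∃ S' : TT K f, S.1 = insert (tV K) (mp S'.1) := by
  apply decomp S (by rw [tV_val]; omega) hz
  intro x hx hne
  have h1 := indep_iff_val.mp S.2.1 x hx (tV K) hz
  have h3 : (x:ℕ) ≠ K+2 := fun he => hne (Fin.ext (by rw [he, tV_val]))
  have h4 := hK x hx
  rw [tV_val] at h1
  have := x.2
  omega

lemma mp_empty (K : ℕ) : mp (∅ : Finset (Fin K)) = ∅ := Finset.map_empty _

lemma P0Q0 (K : ℕ) : Pmat K 0 * QM (K+3) 0 = 0 := by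
  ext S' S
  rw [Matrix.mul_apply, Matrix.zero_apply]
  have hS : S.1 = ∅ := TT_zero_eq S
  have hS' : S'.1 = ∅ := TT_zero_eq S'
  set Ts : TT (K+3) 1 := upS (sV K) (Or.inl (sV_val K)) S' with hTs
  set Tt : TT (K+3) 1 := upS (tV K) (Or.inr (tV_val K)) S' with hTt
  have hTs1 : Ts.1 = insert (sV K) (mp S'.1) := rfl
  have hTt1 : Tt.1 = insert (tV K) (mp S'.1) := rfl
  have hne : Ts ≠ Tt := by
    intro h
    have h2 : Ts.1 = Tt.1 := congrArg Subtype.val h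
    rw [hTs1, hTt1, hS', mp_empty] at h2
    have hm : sV K ∈ insert (tV K) (∅ : Finset (Fin (K+3))) := h2 ▸ Finset.mem_insert_self _ _
    rcases Finset.mem_insert.mp hm with h3 | h3
    · exact sV_ne_tV K h3
    · exact absurd h3 (Finset.notMem_empty _)
  have hvan : ∀ T ∈ Finset.univ, T ∉ ({Ts, Tt} : Finset (TT (K+3) 1)) →
      Pmat K 0 S' T * QM (K+3) 0 T S = 0 := by
    intro T _ hT
    have h1 : T.1 ≠ insert (sV K) (mp S'.1) := by
      intro hc
      exact hT (by rw [Finset.mem_insert]; exact Or.inl (Subtype.ext (hc.trans hTs1.symm)))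
    have h2 : T.1 ≠ insert (tV K) (mp S'.1) := by
      intro hc
      apply hT
      rw [Finset.mem_insert, Finset.mem_singleton]
      exact Or.inr (Subtype.ext (hc.trans hTt1.symm))
    rw [Pmat, if_neg h1, if_neg h2, zero_mul]
  rw [← Finset.sum_subset (Finset.subset_univ _) hvan, Finset.sum_pair hne]
  have e1 : Pmat K 0 S' Ts = 1 := by rw [Pmat, if_pos hTs1]
  have e2 : Pmat K 0 S' Tt = -1 := by
    rw [Pmat, if_neg, if_pos hTt1]
    rw [hTt1]
    intro hc
    have hm : tV K ∈ insert (sV K) (mp S'.1) := hc ▸ Finset.mem_insert_self _ _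
    rcases Finset.mem_insert.mp hm with h3 | h3
    · exact sV_ne_tV K h3.symm
    · exact tV_not_mem_mp _ h3
  have e3 : QM (K+3) 0 Ts S = 1 := by
    rw [Q_entry_insert Ts S (v := sV K) (by rw [hS]; exact Finset.notMem_empty _)
      (by rw [hTs1, hS', mp_empty, hS]), hS, sgn_empty]
  have e4 : QM (K+3) 0 Tt S = 1 := by
    rw [Q_entry_insert Tt S (v := tV K) (by rw [hS]; exact Finset.notMem_empty _)
      (by rw [hTt1, hS', mp_empty, hS]), hS, sgn_empty]
  rw [e1, e2, e3, e4]
  ring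

end OCproof

namespace OCproof

lemma mp_insert {K : ℕ} (u : Fin K) (S : Finset (Fin K)) :
    mp (insert u S) = insert (up K u) (mp S) := Finset.map_insert _ _ _

lemma mp_subset {K : ℕ} {S T : Finset (Fin K)} (h : S ⊆ T) : mp S ⊆ mp T :=
  Finset.map_subset_map.mpr h

lemma sgn_mp {K : ℕ} (S : Finset (Fin K)) (u : Fin K) :
    sgn (mp S) (up K u) = sgn S u := by
  rw [sgn, sgn]
  congr 1
  rw [show (mp S).filter (fun w => Fin.val w < Fin.val (up K u))
      = mp (S.filter (fun w => Fin.val w < Fin.val u)) by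
    ext y
    rw [Finset.mem_filter, mem_mp, mem_mp]
    constructor
    · rintro ⟨⟨hy, hmem⟩, hlt⟩
      exact ⟨hy, Finset.mem_filter.mpr ⟨hmem, hlt⟩⟩
    · rintro ⟨hy, hmem⟩
      obtain ⟨h1, h2⟩ := Finset.mem_filter.mp hmem
      exact ⟨⟨hy, h1⟩, h2⟩]
  rw [card_mp]

lemma sgn_insert_big {L : ℕ} {S : Finset (Fin L)} {z v : Fin L}
    (h : ¬ (Fin.val z < Fin.val v)) (hz : z ∉ S) :
    sgn (insert z S) v = sgn S v := by
  rw [sgn_insert hz, if_neg h, one_mul]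

lemma sgn_top {L : ℕ} {S : Finset (Fin L)} {v : Fin L}
    (h : ∀ x ∈ S, Fin.val x < Fin.val v) : sgn S v = (-1)^(S.card) := by
  rw [sgn, Finset.filter_true_of_mem h]

lemma val_lt_K_of_indep {K : ℕ} {T : Finset (Fin (K+3))}
    (hind : IndepIn (openChain (K+3)) T) {z v : Fin (K+3)} (hzT : z ∈ T)
    (hz : (z:ℕ) = K+1) (hv : v ∈ T) (hne : v ≠ z) : (v:ℕ) < K := by
  have h1 := indep_iff_val.mp hind v hv z hzT
  have h2 := indep_iff_val.mp hind z hzT v hv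
  have h3 : (v:ℕ) ≠ (z:ℕ) := fun he => hne (Fin.ext he)
  have := v.2
  omega

lemma QI_IQ (K f : ℕ) : QM (K+3) (f+1) * Imat K f = Imat K (f+1) * QM K f := by
  ext T S'
  rw [Matrix.mul_apply, Matrix.mul_apply]
  set S₀ : TT (K+3) (f+1) := upS (sV K) (Or.inl (sV_val K)) S' with hS₀
  have hS₀1 : S₀.1 = insert (sV K) (mp S'.1) := rfl
  -- LHS collapses to the single middle term S₀
  have hL : ∑ S : TT (K+3) (f+1), QM (K+3) (f+1) T S * Imat K f S S'
      = QM (K+3) (f+1) T S₀ := by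
    rw [Finset.sum_eq_single_of_mem S₀ (Finset.mem_univ _) (by
      intro b _ hb
      have hI : Imat K f b S' = 0 := by
        rw [Imat, if_neg]
        intro hc
        exact hb (Subtype.ext (by rw [hc, hS₀1]))
      rw [hI, mul_zero])]
    rw [Imat, if_pos hS₀1, mul_one]
  rw [hL]
  by_cases hsub : S₀.1 ⊆ T.1
  · obtain ⟨v, hv, hT⟩ := exists_insert_of_sub T S₀ hsub
    have hsVT : sV K ∈ T.1 := hsub (by rw [hS₀1]; exact Finset.mem_insert_self _ _)
    have hvne : v ≠ sV K := by
      intro he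
      exact hv (by rw [hS₀1, he]; exact Finset.mem_insert_self _ _)
    have hvK : (v:ℕ) < K :=
      val_lt_K_of_indep T.2.1 hsVT (sV_val K) (by rw [hT]; exact Finset.mem_insert_self _ _) hvne
    set u : Fin K := ⟨(v:ℕ), hvK⟩ with hu
    have hupu : up K u = v := Fin.ext rfl
    have huS' : u ∉ S'.1 := by
      intro hc
      apply hv
      rw [hS₀1]
      exact Finset.mem_insert_of_mem (by rw [← hupu]; exact up_mem_mp.mpr hc)
    have hT2 : T.1 = insert (sV K) (insert (up K u) (mp S'.1)) := by
      rw [hT, hS₀1, hupu, Finset.insert_comm]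
    have hindK : IndepIn (openChain K) (insert u S'.1) := by
      apply indep_down
      apply indep_mono _ T.2.1
      rw [hT2, mp_insert]
      exact Finset.subset_insert _ _
    set T₀ : TT K (f+1) := ⟨insert u S'.1, hindK, by
      rw [Finset.card_insert_of_notMem huS', S'.2.2]⟩ with hT₀
    have hT₀1 : T₀.1 = insert u S'.1 := rfl
    have hIm : T.1 = insert (sV K) (mp T₀.1) := by
      rw [hT₀1, mp_insert, hT2]
    have hR : ∑ T'' : TT K (f+1), Imat K (f+1) T T'' * QM K f T'' S'
        = QM K f T₀ S' := by
      rw [Finset.sum_eq_single_of_mem T₀ (Finset.mem_univ _) (by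
        intro b _ hb
        have hI : Imat K (f+1) T b = 0 := by
          rw [Imat, if_neg]
          intro hc
          apply hb
          apply Subtype.ext
          apply mp_inj
          have h1 : mp b.1 = T.1.erase (sV K) := by
            rw [hc, Finset.erase_insert (sV_not_mem_mp _)]
          have h2 : mp T₀.1 = T.1.erase (sV K) := by
            rw [hIm, Finset.erase_insert (sV_not_mem_mp _)]
          rw [h1, h2]
        rw [hI, zero_mul])]
      rw [Imat, if_pos hIm, one_mul]
    rw [hR]
    rw [Q_entry_insert T S₀ hv hT, Q_entry_insert T₀ S' huS' rfl]
    rw [hS₀1, ← hupu]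
    rw [sgn_insert_big (by rw [sV_val, up_val]; omega) (sV_not_mem_mp _), sgn_mp]
  · rw [Q_entry_zero T S₀ hsub]
    apply (Finset.sum_eq_zero _).symm
    intro T'' _
    by_cases hc1 : T.1 = insert (sV K) (mp T''.1)
    · by_cases hc2 : S'.1 ⊆ T''.1
      · exfalso
        apply hsub
        rw [hS₀1, hc1]
        exact Finset.insert_subset_insert _ (mp_subset hc2)
      · rw [Q_entry_zero T'' S' hc2, mul_zero]
    · rw [Imat, if_neg hc1, zero_mul]

end OCproof

namespace OCproof

lemma tV_not_mem_insert_sV {K : ℕ} (X : Finset (Fin K)) :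
    tV K ∉ insert (sV K) (mp X) := by
  intro h
  rcases Finset.mem_insert.mp h with h3 | h3
  · exact sV_ne_tV K h3.symm
  · exact tV_not_mem_mp _ h3

lemma sV_not_mem_insert_tV {K : ℕ} (X : Finset (Fin K)) :
    sV K ∉ insert (tV K) (mp X) := by
  intro h
  rcases Finset.mem_insert.mp h with h3 | h3
  · exact sV_ne_tV K h3
  · exact sV_not_mem_mp _ h3

lemma subset_of_insert_subset_insert {α : Type*} [DecidableEq α] {z : α} {A B : Finset α}
    (hzA : z ∉ A) (h : insert z A ⊆ insert z B) : A ⊆ B := by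
  intro x hx
  have hxz : x ≠ z := fun he => hzA (he ▸ hx)
  have := h (Finset.mem_insert_of_mem hx)
  rcases Finset.mem_insert.mp this with h3 | h3
  · exact absurd h3 hxz
  · exact h3

/-- evaluation of the key upward Q-entry -/
lemma QM_up_entry {K f : ℕ} (z : Fin (K+3)) (hz : (z:ℕ) = K+1 ∨ (z:ℕ) = K+2)
    (S' : TT K f) (W' : TT K (f+1)) {u : Fin K} (hu : u ∉ S'.1)
    (hW : W'.1 = insert u S'.1) :
    QM (K+3) (f+1) (upS z hz W') (upS z hz S') = sgn S'.1 u := by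
  have h1 : (upS z hz W').1 = insert (up K u) (upS z hz S').1 := by
    show insert z (mp W'.1) = insert (up K u) (insert z (mp S'.1))
    rw [hW, mp_insert, Finset.insert_comm]
  have h2 : up K u ∉ (upS z hz S').1 := by
    show up K u ∉ insert z (mp S'.1)
    intro h
    rcases Finset.mem_insert.mp h with h3 | h3
    · have := congrArg Fin.val h3
      rw [up_val] at this
      have := u.2
      omega
    · exact hu (up_mem_mp.mp h3)
  rw [Q_entry_insert _ _ h2 h1]
  show sgn (insert z (mp S'.1)) (up K u) = sgn S'.1 u
  rw [sgn_insert_big (by rw [up_val]; have := u.2; omega) (by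
    intro h
    have := mem_mp_val_lt h
    omega), sgn_mp]

lemma QM_up_zero {K f : ℕ} (z : Fin (K+3)) (hz : (z:ℕ) = K+1 ∨ (z:ℕ) = K+2)
    (S' : TT K f) (W' : TT K (f+1)) (hc : ¬ S'.1 ⊆ W'.1) :
    QM (K+3) (f+1) (upS z hz W') (upS z hz S') = 0 := by
  apply Q_entry_zero
  show ¬ insert z (mp S'.1) ⊆ insert z (mp W'.1)
  intro h
  apply hc
  rw [← Finset.map_subset_map (f := up K)]
  exact subset_of_insert_subset_insert (by
    intro hm
    have := mem_mp_val_lt hm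
    omega) h

lemma QP_PQ (K f : ℕ) : QM K f * Pmat K f = Pmat K (f+1) * QM (K+3) (f+1) := by
  ext W' S
  rw [Matrix.mul_apply, Matrix.mul_apply]
  by_cases hs : sV K ∈ S.1
  · -- case a
    obtain ⟨S'₀, hS'₀⟩ := decomp_sV S hs
    have hSup : S = upS (sV K) (Or.inl (sV_val K)) S'₀ := Subtype.ext hS'₀
    have hL : ∑ S' : TT K f, QM K f W' S' * Pmat K f S' S = QM K f W' S'₀ := by
      rw [Finset.sum_eq_single_of_mem S'₀ (Finset.mem_univ _) (by
        intro b _ hb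
        have hP : Pmat K f b S = 0 := by
          rw [Pmat, if_neg, if_neg]
          · intro hc
            rw [hc] at hs
            exact sV_not_mem_insert_tV _ hs
          · intro hc
            apply hb
            apply Subtype.ext
            apply mp_inj
            have h1 : mp b.1 = S.1.erase (sV K) := by rw [hc, Finset.erase_insert (sV_not_mem_mp _)]
            have h2 : mp S'₀.1 = S.1.erase (sV K) := by rw [hS'₀, Finset.erase_insert (sV_not_mem_mp _)]
            rw [h1, h2]
        rw [hP, mul_zero])]
      rw [Pmat, if_pos hS'₀, mul_one]
    set Ta : TT (K+3) (f+2) := upS (sV K) (Or.inl (sV_val K)) W' with hTa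
    have hTa1 : Ta.1 = insert (sV K) (mp W'.1) := rfl
    have hR : ∑ T : TT (K+3) (f+2), Pmat K (f+1) W' T * QM (K+3) (f+1) T S
        = QM (K+3) (f+1) Ta S := by
      rw [Finset.sum_eq_single_of_mem Ta (Finset.mem_univ _) (by
        intro b _ hb
        rw [Pmat]
        by_cases hc1 : b.1 = insert (sV K) (mp W'.1)
        · exact absurd (Subtype.ext (hc1.trans hTa1.symm)) hb
        · rw [if_neg hc1]
          by_cases hc2 : b.1 = insert (tV K) (mp W'.1)
          · rw [if_pos hc2]
            have : QM (K+3) (f+1) b S = 0 := by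
              apply Q_entry_zero
              intro hsub
              have := hsub hs
              rw [hc2] at this
              exact sV_not_mem_insert_tV _ this
            rw [this, mul_zero]
          · rw [if_neg hc2, zero_mul])]
      rw [Pmat, if_pos hTa1, one_mul]
    rw [hL, hR, hSup]
    by_cases hsub : S'₀.1 ⊆ W'.1
    · obtain ⟨u, hu, hW⟩ := exists_insert_of_sub W' S'₀ hsub
      rw [Q_entry_insert W' S'₀ hu hW, QM_up_entry _ _ _ _ hu hW]
    · rw [Q_entry_zero W' S'₀ hsub, QM_up_zero _ _ _ _ hsub]
  · by_cases ht : tV K ∈ S.1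
    · by_cases hK : ∀ x ∈ S.1, (x:ℕ) ≠ K
      · -- case b
        obtain ⟨S'₁, hS'₁⟩ := decomp_tV S ht hK
        have hSup : S = upS (tV K) (Or.inr (tV_val K)) S'₁ := Subtype.ext hS'₁
        have hL : ∑ S' : TT K f, QM K f W' S' * Pmat K f S' S
            = - QM K f W' S'₁ := by
          rw [Finset.sum_eq_single_of_mem S'₁ (Finset.mem_univ _) (by
            intro b _ hb
            have hP : Pmat K f b S = 0 := by
              rw [Pmat, if_neg, if_neg]
              · intro hc
                apply hb
                apply Subtype.ext
                apply mp_inj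
                have h1 : mp b.1 = S.1.erase (tV K) := by rw [hc, Finset.erase_insert (tV_not_mem_mp _)]
                have h2 : mp S'₁.1 = S.1.erase (tV K) := by rw [hS'₁, Finset.erase_insert (tV_not_mem_mp _)]
                rw [h1, h2]
              · intro hc
                rw [hc] at ht
                exact tV_not_mem_insert_sV _ ht
            rw [hP, mul_zero])]
          rw [Pmat, if_neg (by
            intro hc
            rw [hc] at ht
            exact tV_not_mem_insert_sV _ ht), if_pos hS'₁]
          ring
        set Tb : TT (K+3) (f+2) := upS (tV K) (Or.inr (tV_val K)) W' with hTb
        have hTb1 : Tb.1 = insert (tV K) (mp W'.1) := rfl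
        have hR : ∑ T : TT (K+3) (f+2), Pmat K (f+1) W' T * QM (K+3) (f+1) T S
            = - QM (K+3) (f+1) Tb S := by
          rw [Finset.sum_eq_single_of_mem Tb (Finset.mem_univ _) (by
            intro b _ hb
            rw [Pmat]
            by_cases hc1 : b.1 = insert (sV K) (mp W'.1)
            · rw [if_pos hc1]
              have : QM (K+3) (f+1) b S = 0 := by
                apply Q_entry_zero
                intro hsub
                have := hsub ht
                rw [hc1] at this
                exact tV_not_mem_insert_sV _ this
              rw [this, mul_zero]
            · rw [if_neg hc1]
              by_cases hc2 : b.1 = insert (tV K) (mp W'.1)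
              · exact absurd (Subtype.ext (hc2.trans hTb1.symm)) hb
              · rw [if_neg hc2, zero_mul])]
          rw [Pmat, if_neg (by
            rw [hTb1]
            intro hc
            have : tV K ∈ insert (sV K) (mp W'.1) := hc ▸ Finset.mem_insert_self _ _
            exact tV_not_mem_insert_sV _ this), if_pos hTb1]
          ring
        rw [hL, hR, hSup]
        by_cases hsub : S'₁.1 ⊆ W'.1
        · obtain ⟨u, hu, hW⟩ := exists_insert_of_sub W' S'₁ hsub
          rw [Q_entry_insert W' S'₁ hu hW, QM_up_entry _ _ _ _ hu hW]
        · rw [Q_entry_zero W' S'₁ hsub, QM_up_zero _ _ _ _ hsub]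
      · -- case c : tV ∈ S and some element has value K
        push_neg at hK
        obtain ⟨x, hxS, hxK⟩ := hK
        have hL : ∑ S' : TT K f, QM K f W' S' * Pmat K f S' S = 0 := by
          apply Finset.sum_eq_zero
          intro S' _
          have hP : Pmat K f S' S = 0 := by
            rw [Pmat, if_neg, if_neg]
            · intro hc
              rw [hc] at hxS
              rcases Finset.mem_insert.mp hxS with h3 | h3
              · rw [h3, tV_val] at hxK; omega
              · have := mem_mp_val_lt h3; omega
            · intro hc
              rw [hc] at ht
              exact tV_not_mem_insert_sV _ ht
          rw [hP, mul_zero]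
        have hR : ∑ T : TT (K+3) (f+2), Pmat K (f+1) W' T * QM (K+3) (f+1) T S = 0 := by
          apply Finset.sum_eq_zero
          intro T _
          by_cases hsub : S.1 ⊆ T.1
          · have hP : Pmat K (f+1) W' T = 0 := by
              rw [Pmat, if_neg, if_neg]
              · intro hc
                have := hsub hxS
                rw [hc] at this
                rcases Finset.mem_insert.mp this with h3 | h3
                · rw [h3, tV_val] at hxK; omega
                · have := mem_mp_val_lt h3; omega
              · intro hc
                have := hsub ht
                rw [hc] at this
                exact tV_not_mem_insert_sV _ this
            rw [hP, zero_mul]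
          · rw [Q_entry_zero T S hsub, mul_zero]
        rw [hL, hR]
    · -- case d : sV ∉ S, tV ∉ S
      have hL : ∑ S' : TT K f, QM K f W' S' * Pmat K f S' S = 0 := by
        apply Finset.sum_eq_zero
        intro S' _
        have hP : Pmat K f S' S = 0 := by
          rw [Pmat, if_neg, if_neg]
          · intro hc
            exact ht (hc ▸ Finset.mem_insert_self _ _)
          · intro hc
            exact hs (hc ▸ Finset.mem_insert_self _ _)
        rw [hP, mul_zero]
      rw [hL]
      by_cases hd : S.1 = mp W'.1
      · set Ta : TT (K+3) (f+2) := upS (sV K) (Or.inl (sV_val K)) W' with hTa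
        set Tb : TT (K+3) (f+2) := upS (tV K) (Or.inr (tV_val K)) W' with hTb
        have hTa1 : Ta.1 = insert (sV K) (mp W'.1) := rfl
        have hTb1 : Tb.1 = insert (tV K) (mp W'.1) := rfl
        have hab : Ta ≠ Tb := by
          intro h
          have h2 : Ta.1 = Tb.1 := congrArg Subtype.val h
          rw [hTa1, hTb1] at h2
          exact sV_not_mem_insert_tV _ (h2 ▸ Finset.mem_insert_self _ _)
        have hvan : ∀ T ∈ Finset.univ, T ∉ ({Ta, Tb} : Finset (TT (K+3) (f+2))) →
            Pmat K (f+1) W' T * QM (K+3) (f+1) T S = 0 := by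
          intro T _ hT
          have h1 : T.1 ≠ insert (sV K) (mp W'.1) := by
            intro hc
            exact hT (by rw [Finset.mem_insert]; exact Or.inl (Subtype.ext (hc.trans hTa1.symm)))
          have h2 : T.1 ≠ insert (tV K) (mp W'.1) := by
            intro hc
            apply hT
            rw [Finset.mem_insert, Finset.mem_singleton]
            exact Or.inr (Subtype.ext (hc.trans hTb1.symm))
          rw [Pmat, if_neg h1, if_neg h2, zero_mul]
        rw [← Finset.sum_subset (Finset.subset_univ _) hvan, Finset.sum_pair hab]
        have hallK : ∀ x ∈ S.1, (x:ℕ) < K := by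
          intro x hx
          rw [hd] at hx
          exact mem_mp_val_lt hx
        have ea : Pmat K (f+1) W' Ta = 1 := by rw [Pmat, if_pos hTa1]
        have eb : Pmat K (f+1) W' Tb = -1 := by
          rw [Pmat, if_neg, if_pos hTb1]
          rw [hTb1]
          intro hc
          exact tV_not_mem_insert_sV _ (hc ▸ Finset.mem_insert_self _ _)
        have eqa : QM (K+3) (f+1) Ta S = (-1)^(f+1) := by
          rw [Q_entry_insert Ta S (v := sV K) hs (by rw [hTa1, hd]), sgn_top, S.2.2]
          intro x hx
          have := hallK x hx
          rw [sV_val]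
          omega
        have eqb : QM (K+3) (f+1) Tb S = (-1)^(f+1) := by
          rw [Q_entry_insert Tb S (v := tV K) ht (by rw [hTb1, hd]), sgn_top, S.2.2]
          intro x hx
          have := hallK x hx
          rw [tV_val]
          omega
        rw [ea, eb, eqa, eqb]
        ring
      · apply (Finset.sum_eq_zero _).symm
        intro T _
        by_cases hsub : S.1 ⊆ T.1
        · have hP : Pmat K (f+1) W' T = 0 := by
            rw [Pmat, if_neg, if_neg]
            · intro hc
              apply hd
              have hsub2 : S.1 ⊆ mp W'.1 := by
                intro x hx
                have := hsub hx
                rw [hc] at this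
                rcases Finset.mem_insert.mp this with h3 | h3
                · exact absurd (h3 ▸ hx) ht
                · exact h3
              apply Finset.eq_of_subset_of_card_le hsub2
              rw [card_mp, W'.2.2, S.2.2]
            · intro hc
              apply hd
              have hsub2 : S.1 ⊆ mp W'.1 := by
                intro x hx
                have := hsub hx
                rw [hc] at this
                rcases Finset.mem_insert.mp this with h3 | h3
                · exact absurd (h3 ▸ hx) hs
                · exact h3
              apply Finset.eq_of_subset_of_card_le hsub2
              rw [card_mp, W'.2.2, S.2.2]
          rw [hP, zero_mul]
        · rw [Q_entry_zero T S hsub, mul_zero]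

end OCproof

namespace OCproof

lemma neg_one_pow_mul_self (n : ℕ) : (-1:ℂ)^n * (-1:ℂ)^n = 1 := by
  rw [← pow_add]
  exact Even.neg_one_pow ⟨n, rfl⟩

lemma neg_one_pow_succ_add (f : ℕ) : (-1:ℂ)^(f+1) + (-1:ℂ)^f = 0 := by
  rw [pow_succ]
  ring

lemma adj_sV_tV (K : ℕ) : (openChain (K+3)).Adj (sV K) (tV K) :=
  adj_iff.mpr (Or.inl (by rw [sV_val, tV_val]))

lemma not_both_sV_tV {K g : ℕ} (T : TT (K+3) g) (hs : sV K ∈ T.1) : tV K ∉ T.1 :=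
  fun ht => T.2.1 (sV K) hs (tV K) ht (adj_sV_tV K)

lemma indep_insert_tV_top {K : ℕ} {T : Finset (Fin (K+3))}
    (hind : IndepIn (openChain (K+3)) T) (hs : sV K ∉ T) :
    IndepIn (openChain (K+3)) (insert (tV K) T) := by
  rw [indep_iff_val] at hind ⊢
  intro u hu v hv
  have hval : ∀ x ∈ T, (x:ℕ) ≠ K+1 := by
    intro x hx he
    exact hs (by rwa [show sV K = x from Fin.ext (by rw [sV_val, he])])
  rcases Finset.mem_insert.mp hu with rfl | hu <;>
    rcases Finset.mem_insert.mp hv with hv' | hv'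
  · rw [hv']; omega
  · have h1 := hval v hv'
    have := v.2
    rw [tV_val]
    omega
  · rw [hv', tV_val]
    have h1 := hval u hu
    have := u.2
    omega
  · exact hind u hu v hv'

/-- U₀ : T with tV inserted, at top level -/
noncomputable def upT {K f : ℕ} (T : TT (K+3) (f+1))
    (hs : sV K ∉ T.1) (ht : tV K ∉ T.1) : TT (K+3) (f+2) :=
  ⟨insert (tV K) T.1, indep_insert_tV_top T.2.1 hs,
    by rw [Finset.card_insert_of_notMem ht, T.2.2]⟩

/-- U₁ : S with tV erased -/
noncomputable def downT {K f : ℕ} (S : TT (K+3) (f+1)) (ht : tV K ∈ S.1) :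
    TT (K+3) f :=
  ⟨S.1.erase (tV K), indep_mono (Finset.erase_subset _ _) S.2.1,
    by simp [Finset.card_erase_of_mem ht, S.2.2]⟩

lemma sumHQ_zero {K f : ℕ} (T S : TT (K+3) (f+1))
    (h : tV K ∈ T.1 ∨ sV K ∈ T.1) :
    ∑ U : TT (K+3) (f+2), Hmat K (f+1) T U * QM (K+3) (f+1) U S = 0 := by
  apply Finset.sum_eq_zero
  intro U _
  have hH : Hmat K (f+1) T U = 0 := by
    rw [Hmat, if_neg]
    rintro ⟨hU, htT⟩
    rcases h with h | h
    · exact htT h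
    · apply U.2.1 (sV K) (by rw [hU]; exact Finset.mem_insert_of_mem h) (tV K)
        (by rw [hU]; exact Finset.mem_insert_self _ _) (adj_sV_tV K)
  rw [hH, zero_mul]

lemma sumHQ_eval {K f : ℕ} (T S : TT (K+3) (f+1))
    (hs : sV K ∉ T.1) (ht : tV K ∉ T.1) :
    ∑ U : TT (K+3) (f+2), Hmat K (f+1) T U * QM (K+3) (f+1) U S
      = (-1)^(f+1) * QM (K+3) (f+1) (upT T hs ht) S := by
  rw [Finset.sum_eq_single_of_mem (upT T hs ht) (Finset.mem_univ _) (by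
    intro b _ hb
    have hH : Hmat K (f+1) T b = 0 := by
      rw [Hmat, if_neg]
      rintro ⟨hU, -⟩
      exact hb (Subtype.ext hU)
    rw [hH, zero_mul])]
  have hH : Hmat K (f+1) T (upT T hs ht) = (-1)^(f+1) := by
    rw [Hmat, if_pos ⟨rfl, ht⟩, T.2.2]
  rw [hH]

lemma sumQH_zero {K f : ℕ} (T : TT (K+3) (f+1)) (S : TT (K+3) (f+1))
    (ht : tV K ∉ S.1) :
    ∑ U : TT (K+3) f, QM (K+3) f T U * Hmat K f U S = 0 := by
  apply Finset.sum_eq_zero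
  intro U _
  have hH : Hmat K f U S = 0 := by
    rw [Hmat, if_neg]
    rintro ⟨hU, -⟩
    exact ht (hU ▸ Finset.mem_insert_self _ _)
  rw [hH, mul_zero]

lemma sumQH_eval {K f : ℕ} (T : TT (K+3) (f+1)) (S : TT (K+3) (f+1))
    (ht : tV K ∈ S.1) :
    ∑ U : TT (K+3) f, QM (K+3) f T U * Hmat K f U S
      = QM (K+3) f T (downT S ht) * (-1)^f := by
  have hins : S.1 = insert (tV K) (S.1.erase (tV K)) := (Finset.insert_erase ht).symm
  rw [Finset.sum_eq_single_of_mem (downT S ht) (Finset.mem_univ _) (by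
    intro b _ hb
    have hH : Hmat K f b S = 0 := by
      rw [Hmat, if_neg]
      rintro ⟨hU, htb⟩
      apply hb
      apply Subtype.ext
      show b.1 = S.1.erase (tV K)
      rw [hU, Finset.erase_insert htb]
    rw [hH, mul_zero])]
  have hH : Hmat K f (downT S ht) S = (-1)^f := by
    rw [Hmat, if_pos ⟨hins, Finset.notMem_erase _ _⟩]
    show ((-1:ℂ))^((S.1.erase (tV K)).card) = (-1)^f
    rw [Finset.card_erase_of_mem ht, S.2.2]
    norm_num
  rw [hH]

lemma sumIP_zero {K f : ℕ} (T S : TT (K+3) (f+1)) (hs : sV K ∉ T.1) :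
    ∑ W' : TT K f, Imat K f T W' * Pmat K f W' S = 0 := by
  apply Finset.sum_eq_zero
  intro W' _
  have hI : Imat K f T W' = 0 := by
    rw [Imat, if_neg]
    intro hc
    exact hs (hc ▸ Finset.mem_insert_self _ _)
  rw [hI, zero_mul]

lemma sumIP_eval {K f : ℕ} (T S : TT (K+3) (f+1)) (W'₀ : TT K f)
    (hT : T.1 = insert (sV K) (mp W'₀.1)) :
    ∑ W' : TT K f, Imat K f T W' * Pmat K f W' S = Pmat K f W'₀ S := by
  rw [Finset.sum_eq_single_of_mem W'₀ (Finset.mem_univ _) (by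
    intro b _ hb
    have hI : Imat K f T b = 0 := by
      rw [Imat, if_neg]
      intro hc
      apply hb
      apply Subtype.ext
      apply mp_inj
      have h1 : mp b.1 = T.1.erase (sV K) := by rw [hc, Finset.erase_insert (sV_not_mem_mp _)]
      have h2 : mp W'₀.1 = T.1.erase (sV K) := by rw [hT, Finset.erase_insert (sV_not_mem_mp _)]
      rw [h1, h2]
    rw [hI, zero_mul])]
  rw [Imat, if_pos hT, one_mul]

end OCproof

namespace OCproof

lemma val_lt_tV {K : ℕ} {x : Fin (K+3)} (h : x ≠ tV K) : (x:ℕ) < (tV K : ℕ) := by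
  have h2 := x.2
  have h3 : (x:ℕ) ≠ K+2 := fun he => h (Fin.ext (by rw [he, tV_val]))
  rw [tV_val]
  omega

lemma homotopy (K f : ℕ) :
    Hmat K (f+1) * QM (K+3) (f+1) + QM (K+3) f * Hmat K f + Imat K f * Pmat K f = 1 := by
  ext T S
  rw [Matrix.add_apply, Matrix.add_apply, Matrix.mul_apply, Matrix.mul_apply,
    Matrix.mul_apply, Matrix.one_apply]
  by_cases htS : tV K ∈ S.1
  · by_cases htT : tV K ∈ T.1
    · -- case D
      rw [sumHQ_zero T S (Or.inl htT), sumQH_eval T S htS,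
        sumIP_zero T S (fun hs => not_both_sV_tV T hs htT)]
      by_cases hTS : T = S
      · subst hTS
        rw [if_pos rfl]
        have he : T.1 = insert (tV K) ((downT T htS).1) := (Finset.insert_erase htS).symm
        rw [Q_entry_insert T (downT T htS) (Finset.notMem_erase _ _) he]
        have hs : sgn ((downT T htS).1) (tV K) = (-1)^f := by
          rw [sgn_top, (downT T htS).2.2]
          intro x hx
          exact val_lt_tV (Finset.mem_erase.mp hx).1
        rw [hs]
        linear_combination neg_one_pow_mul_self f
      · rw [if_neg hTS]
        by_cases hsub : (downT S htS).1 ⊆ T.1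
        · exfalso
          obtain ⟨w, hw, hTw⟩ := exists_insert_of_sub T (downT S htS) hsub
          have hwt : w = tV K := by
            have := htT
            rw [hTw] at this
            rcases Finset.mem_insert.mp this with h3 | h3
            · exact h3.symm
            · exact absurd h3 (Finset.notMem_erase _ _)
          apply hTS
          apply Subtype.ext
          rw [hTw, hwt]
          show insert (tV K) (S.1.erase (tV K)) = S.1
          exact Finset.insert_erase htS
        · rw [Q_entry_zero T _ hsub]
          ring
    · -- case C : tV ∈ S, tV ∉ T; target is 0
      have hTS : T ≠ S := fun h => htT (h ▸ htS)
      rw [if_neg hTS, sumQH_eval T S htS]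
      by_cases hsub : (downT S htS).1 ⊆ T.1
      · obtain ⟨w, hw, hTw⟩ := exists_insert_of_sub T (downT S htS) hsub
        have hwnt : w ≠ tV K := by
          intro he
          exact htT (by rw [hTw, he]; exact Finset.mem_insert_self _ _)
        have hSins : S.1 = insert (tV K) ((downT S htS).1) := (Finset.insert_erase htS).symm
        have hwS : w ∉ S.1 := by
          intro hc
          rw [hSins] at hc
          rcases Finset.mem_insert.mp hc with h3 | h3
          · exact hwnt h3
          · exact hw h3
        by_cases hsT : sV K ∈ T.1
        · -- c2 : w = sV
          have hwsV : w = sV K := by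
            have h1 : sV K ∉ (downT S htS).1 := by
              intro hc
              have h2 : sV K ∈ S.1 := (Finset.erase_subset _ _) hc
              exact not_both_sV_tV S h2 htS
            have := hsT
            rw [hTw] at this
            rcases Finset.mem_insert.mp this with h3 | h3
            · exact h3.symm
            · exact absurd h3 h1
          rw [sumHQ_zero T S (Or.inr hsT)]
          obtain ⟨W'₀, hW'₀⟩ := decomp_sV T hsT
          rw [sumIP_eval T S W'₀ hW'₀]
          have hmpU : mp W'₀.1 = (downT S htS).1 := by
            have h1 : mp W'₀.1 = T.1.erase (sV K) := by
              rw [hW'₀, Finset.erase_insert (sV_not_mem_mp _)]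
            rw [h1, hTw, hwsV, Finset.erase_insert (by
              intro hc
              exact not_both_sV_tV S ((Finset.erase_subset _ _) hc) htS)]
          have hP : Pmat K f W'₀ S = -1 := by
            rw [Pmat, if_neg, if_pos]
            · rw [hmpU]
              exact hSins
            · intro hc
              apply hTS
              apply Subtype.ext
              rw [hW'₀, ← hc]
          rw [hP]
          have hQ : QM (K+3) f T (downT S htS) = (-1)^f := by
            rw [Q_entry_insert T (downT S htS) hw hTw, hwsV, sgn_top, (downT S htS).2.2]
            intro x hx
            have hxT : x ∈ T.1 := hTw ▸ Finset.mem_insert_of_mem hx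
            have hxs : x ≠ sV K := by
              intro he
              rw [he, ← hwsV] at hx
              exact hw hx
            have := val_lt_K_of_indep T.2.1 hsT (sV_val K) hxT hxs
            rw [sV_val]
            omega
          rw [hQ]
          linear_combination neg_one_pow_mul_self f
        · -- c1 : sV ∉ T
          rw [sumHQ_eval T S hsT htT, sumIP_zero T S hsT]
          have hU₀ : (upT T hsT htT).1 = insert w S.1 := by
            show insert (tV K) T.1 = insert w S.1
            rw [hTw, Finset.insert_comm, ← hSins]
          rw [Q_entry_insert (upT T hsT htT) S hwS hU₀,
            Q_entry_insert T (downT S htS) hw hTw]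
          have hnm : ¬ ((tV K : ℕ) < (w:ℕ)) := by
            have := val_lt_tV hwnt
            omega
          have hsgn : sgn S.1 w = sgn ((downT S htS).1) w := by
            rw [hSins, sgn_insert_big hnm (show tV K ∉ (downT S htS).1 from Finset.notMem_erase _ _)]
          rw [hsgn, pow_succ]
          ring
      · -- downT S ⊄ T : everything vanishes
        rw [Q_entry_zero T _ hsub]
        by_cases hsT : sV K ∈ T.1
        · rw [sumHQ_zero T S (Or.inr hsT)]
          obtain ⟨W'₀, hW'₀⟩ := decomp_sV T hsT
          rw [sumIP_eval T S W'₀ hW'₀]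
          have hP : Pmat K f W'₀ S = 0 := by
            rw [Pmat, if_neg, if_neg]
            · intro hc
              apply hsub
              have h1 : (downT S htS).1 = mp W'₀.1 := by
                show S.1.erase (tV K) = mp W'₀.1
                rw [hc, Finset.erase_insert (tV_not_mem_mp _)]
              rw [h1, hW'₀]
              exact (Finset.subset_insert _ _)
            · intro hc
              apply hTS
              apply Subtype.ext
              rw [hW'₀, ← hc]
          rw [hP]
          ring
        · rw [sumHQ_eval T S hsT htT, sumIP_zero T S hsT]
          have hQ0 : QM (K+3) (f+1) (upT T hsT htT) S = 0 := by
            apply Q_entry_zero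
            intro hc
            apply hsub
            intro x hx
            obtain ⟨hx1, hx2⟩ := Finset.mem_erase.mp hx
            have := hc hx2
            rcases Finset.mem_insert.mp this with h3 | h3
            · exact absurd h3 hx1
            · exact h3
          rw [hQ0]
          ring
  · by_cases htT : tV K ∈ T.1
    · -- case B : all zero
      have hTS : T ≠ S := fun h => htS (h ▸ htT)
      rw [if_neg hTS, sumHQ_zero T S (Or.inl htT), sumQH_zero T S htS,
        sumIP_zero T S (fun hs => not_both_sV_tV T hs htT)]
      ring
    · -- case A
      rw [sumQH_zero T S htS]
      by_cases hsT : sV K ∈ T.1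
      · -- a2
        rw [sumHQ_zero T S (Or.inr hsT)]
        obtain ⟨W'₀, hW'₀⟩ := decomp_sV T hsT
        rw [sumIP_eval T S W'₀ hW'₀]
        by_cases hTS : T = S
        · subst hTS
          rw [if_pos rfl, Pmat, if_pos hW'₀]
          ring
        · rw [if_neg hTS, Pmat, if_neg (fun hc => hTS (Subtype.ext (hW'₀.trans hc.symm))),
            if_neg (fun hc => htS (by rw [hc]; exact Finset.mem_insert_self _ _))]
          ring
      · -- a1
        rw [sumHQ_eval T S hsT htT, sumIP_zero T S hsT]
        by_cases hTS : T = S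
        · subst hTS
          rw [if_pos rfl]
          have hU₀ : (upT T hsT htT).1 = insert (tV K) T.1 := rfl
          rw [Q_entry_insert (upT T hsT htT) T htT hU₀]
          have hsgn : sgn T.1 (tV K) = (-1)^(f+1) := by
            rw [sgn_top, T.2.2]
            intro x hx
            exact val_lt_tV (fun he => htT (he ▸ hx))
          rw [hsgn]
          linear_combination neg_one_pow_mul_self (f+1)
        · rw [if_neg hTS]
          have hQ0 : QM (K+3) (f+1) (upT T hsT htT) S = 0 := by
            apply Q_entry_zero
            intro hc
            apply hTS
            apply Subtype.ext
            apply (Finset.eq_of_subset_of_card_le _ (by rw [T.2.2, S.2.2])).symm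
            intro x hx
            have := hc hx
            rcases Finset.mem_insert.mp this with h3 | h3
            · exact absurd (h3 ▸ hx) htS
            · exact h3
          rw [hQ0]
          ring

end OCproof

namespace OCproof

noncomputable def Il (K f : ℕ) : (TT K f → ℂ) →ₗ[ℂ] (TT (K+3) (f+1) → ℂ) :=
  Matrix.toLin' (Imat K f)
noncomputable def Pl (K f : ℕ) : (TT (K+3) (f+1) → ℂ) →ₗ[ℂ] (TT K f → ℂ) :=
  Matrix.toLin' (Pmat K f)
noncomputable def Hl (K f : ℕ) : (TT (K+3) (f+1) → ℂ) →ₗ[ℂ] (TT (K+3) f → ℂ) :=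
  Matrix.toLin' (Hmat K f)

lemma PIl (K f : ℕ) : (Pl K f) ∘ₗ (Il K f) = LinearMap.id := by
  rw [Pl, Il, ← Matrix.toLin'_mul, PI_one]
  exact Matrix.toLin'_one

lemma Il_inj (K f : ℕ) : Function.Injective (Il K f) := by
  intro a b h
  have h1 : (Pl K f) ((Il K f) a) = (Pl K f) ((Il K f) b) := by rw [h]
  have h2 : ∀ y, (Pl K f) ((Il K f) y) = y := fun y => by
    have := congrArg (fun (g : _ →ₗ[ℂ] _) => g y) (PIl K f)
    simpa using this
  rw [h2, h2] at h1
  exact h1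

lemma QIl (K g : ℕ) : (Qgr (openChain (K+3)) Fin.val (g+1)) ∘ₗ (Il K g)
    = (Il K (g+1)) ∘ₗ (Qgr (openChain K) Fin.val g) := by
  rw [Qgr_eq, Qgr_eq, Il, Il, ← Matrix.toLin'_mul, ← Matrix.toLin'_mul, QI_IQ]

lemma QPl (K g : ℕ) : (Qgr (openChain K) Fin.val g) ∘ₗ (Pl K g)
    = (Pl K (g+1)) ∘ₗ (Qgr (openChain (K+3)) Fin.val (g+1)) := by
  rw [Qgr_eq, Qgr_eq, Pl, Pl, ← Matrix.toLin'_mul, ← Matrix.toLin'_mul, QP_PQ]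

lemma P0Q0l (K : ℕ) : (Pl K 0) ∘ₗ (Qgr (openChain (K+3)) Fin.val 0) = 0 := by
  rw [Qgr_eq, Pl, ← Matrix.toLin'_mul, P0Q0]
  exact map_zero Matrix.toLin'

lemma homotopyl (K f : ℕ) (x : TT (K+3) (f+1) → ℂ) :
    Hl K (f+1) (Qgr (openChain (K+3)) Fin.val (f+1) x)
      + Qgr (openChain (K+3)) Fin.val f (Hl K f x)
      + Il K f (Pl K f x) = x := by
  have h : ((Hl K (f+1)) ∘ₗ (Qgr (openChain (K+3)) Fin.val (f+1))
      + (Qgr (openChain (K+3)) Fin.val f) ∘ₗ (Hl K f)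
      + (Il K f) ∘ₗ (Pl K f)) x = (LinearMap.id (R := ℂ) (M := TT (K+3) (f+1) → ℂ)) x := by
    congr 1
    rw [Qgr_eq, Qgr_eq, Hl, Hl, Il, Pl, ← Matrix.toLin'_mul, ← Matrix.toLin'_mul,
      ← Matrix.toLin'_mul, ← map_add, ← map_add, homotopy]
    exact Matrix.toLin'_one
  simpa using h

lemma step (K f : ℕ) :
    cohDim (openChain (K+3)) Fin.val (f+1) = cohDim (openChain K) Fin.val f := by
  have hQQL := range_le_ker (K+3) f
  have claim1 : LinearMap.ker (Qgr (openChain (K+3)) Fin.val (f+1)) =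
      (LinearMap.ker (Qgr (openChain K) Fin.val f)).map (Il K f)
        ⊔ LinearMap.range (Qgr (openChain (K+3)) Fin.val f) := by
    apply le_antisymm
    · intro x hx
      have hx0 : Qgr (openChain (K+3)) Fin.val (f+1) x = 0 := hx
      have hPx : (Pl K f x) ∈ LinearMap.ker (Qgr (openChain K) Fin.val f) := by
        rw [LinearMap.mem_ker]
        have h1 : Qgr (openChain K) Fin.val f (Pl K f x)
            = (Pl K (f+1)) (Qgr (openChain (K+3)) Fin.val (f+1) x) := by
          have h2 := congrArg (fun (g : _ →ₗ[ℂ] _) => g x) (QPl K f)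
          simpa using h2
        rw [h1, hx0, map_zero]
      have hdec := homotopyl K f x
      rw [hx0, map_zero, zero_add] at hdec
      rw [Submodule.mem_sup]
      refine ⟨Il K f (Pl K f x), Submodule.mem_map_of_mem hPx,
        Qgr (openChain (K+3)) Fin.val f (Hl K f x), LinearMap.mem_range_self _ _, ?_⟩
      exact (add_comm ((Il K f) ((Pl K f) x)) _).trans hdec
    · apply sup_le
      · rintro x ⟨y, hy, rfl⟩
        have hy' : (Qgr (openChain K) Fin.val f) y = 0 := hy
        rw [LinearMap.mem_ker]
        have h2 := congrArg (fun (g : _ →ₗ[ℂ] _) => g y) (QIl K f)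
        simp only [LinearMap.comp_apply] at h2
        rw [h2, hy', map_zero]
      · exact hQQL
  have e2 := Submodule.finrank_sup_add_finrank_inf_eq
    ((LinearMap.ker (Qgr (openChain K) Fin.val f)).map (Il K f))
    (LinearMap.range (Qgr (openChain (K+3)) Fin.val f))
  have e3 : Module.finrank ℂ
      ((LinearMap.ker (Qgr (openChain K) Fin.val f)).map (Il K f))
      = Module.finrank ℂ (LinearMap.ker (Qgr (openChain K) Fin.val f)) :=
    ((Submodule.equivMapOfInjective _ (Il_inj K f) _).finrank_eq).symm
  have e1 := cohDim_succ_add (K+3) f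
  rw [claim1] at e1
  cases f with
  | zero =>
    have claim2 : ((LinearMap.ker (Qgr (openChain K) Fin.val 0)).map (Il K 0))
        ⊓ LinearMap.range (Qgr (openChain (K+3)) Fin.val 0) = ⊥ := by
      rw [eq_bot_iff]
      intro x hx
      obtain ⟨h1, h2⟩ := Submodule.mem_inf.mp hx
      obtain ⟨z, hz, rfl⟩ := h1
      obtain ⟨w, hw⟩ := h2
      have hz0 : z = 0 := by
        have h3 : ∀ y, (Pl K 0) ((Il K 0) y) = y := fun y => by
          have := congrArg (fun (g : _ →ₗ[ℂ] _) => g y) (PIl K 0)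
          simpa using this
        have h4 : z = Pl K 0 (Qgr (openChain (K+3)) Fin.val 0 w) := by
          rw [hw, h3]
        have h5 := congrArg (fun (g : _ →ₗ[ℂ] _) => g w) (P0Q0l K)
        simp only [LinearMap.comp_apply, LinearMap.zero_apply] at h5
        rw [h4, h5]
      rw [hz0, map_zero]
      exact Submodule.zero_mem ⊥
    rw [claim2, finrank_bot] at e2
    rw [cohDim_zero_eq K]
    have E1 : cohDim (openChain (K+3)) Fin.val (0+1)
        + Module.finrank ℂ (LinearMap.range (Qgr (openChain (K+3)) Fin.val 0))
        = Module.finrank ℂ ↥(Submodule.map (Il K 0)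
            (LinearMap.ker (Qgr (openChain K) Fin.val 0))
          ⊔ LinearMap.range (Qgr (openChain (K+3)) Fin.val 0)) := e1
    have E2 : Module.finrank ℂ ↥(Submodule.map (Il K 0)
            (LinearMap.ker (Qgr (openChain K) Fin.val 0))
          ⊔ LinearMap.range (Qgr (openChain (K+3)) Fin.val 0)) + 0
        = Module.finrank ℂ ↥(Submodule.map (Il K 0)
            (LinearMap.ker (Qgr (openChain K) Fin.val 0)))
          + Module.finrank ℂ (LinearMap.range (Qgr (openChain (K+3)) Fin.val 0)) := e2
    have E3 : Module.finrank ℂ ↥(Submodule.map (Il K 0)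
            (LinearMap.ker (Qgr (openChain K) Fin.val 0)))
        = Module.finrank ℂ (LinearMap.ker (Qgr (openChain K) Fin.val 0)) := e3
    omega
  | succ g =>
    have claim2 : ((LinearMap.ker (Qgr (openChain K) Fin.val (g+1))).map (Il K (g+1)))
        ⊓ LinearMap.range (Qgr (openChain (K+3)) Fin.val (g+1))
        = (LinearMap.range (Qgr (openChain K) Fin.val g)).map (Il K (g+1)) := by
      apply le_antisymm
      · intro x hx
        obtain ⟨h1, h2⟩ := Submodule.mem_inf.mp hx
        obtain ⟨z, hz, rfl⟩ := h1
        obtain ⟨w, hw⟩ := h2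
        have h3 : ∀ y, (Pl K (g+1)) ((Il K (g+1)) y) = y := fun y => by
          have := congrArg (fun (g' : _ →ₗ[ℂ] _) => g' y) (PIl K (g+1))
          simpa using this
        have h4 : z = Pl K (g+1) (Qgr (openChain (K+3)) Fin.val (g+1) w) := by
          rw [hw, h3]
        have h5 := congrArg (fun (g' : _ →ₗ[ℂ] _) => g' w) (QPl K g)
        simp only [LinearMap.comp_apply] at h5
        rw [← h5] at h4
        exact Submodule.mem_map_of_mem ⟨Pl K g w, h4.symm⟩
      · apply le_inf
        · exact Submodule.map_mono (range_le_ker K g)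
        · rintro x ⟨z, ⟨y, rfl⟩, rfl⟩
          have h2 := congrArg (fun (g' : _ →ₗ[ℂ] _) => g' y) (QIl K g)
          simp only [LinearMap.comp_apply] at h2
          exact ⟨Il K g y, h2⟩
    rw [claim2] at e2
    have e4 : Module.finrank ℂ
        ((LinearMap.range (Qgr (openChain K) Fin.val g)).map (Il K (g+1)))
        = Module.finrank ℂ (LinearMap.range (Qgr (openChain K) Fin.val g)) :=
      ((Submodule.equivMapOfInjective _ (Il_inj K (g+1)) _).finrank_eq).symm
    have e5 := cohDim_succ_add K g
    have E1 : cohDim (openChain (K+3)) Fin.val (g+1+1)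
        + Module.finrank ℂ (LinearMap.range (Qgr (openChain (K+3)) Fin.val (g+1)))
        = Module.finrank ℂ ↥(Submodule.map (Il K (g+1))
            (LinearMap.ker (Qgr (openChain K) Fin.val (g+1)))
          ⊔ LinearMap.range (Qgr (openChain (K+3)) Fin.val (g+1))) := e1
    have E2 : Module.finrank ℂ ↥(Submodule.map (Il K (g+1))
            (LinearMap.ker (Qgr (openChain K) Fin.val (g+1)))
          ⊔ LinearMap.range (Qgr (openChain (K+3)) Fin.val (g+1)))
        + Module.finrank ℂ (Submodule.map (Il K (g+1))
            (LinearMap.range (Qgr (openChain K) Fin.val g)))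
        = Module.finrank ℂ ↥(Submodule.map (Il K (g+1))
            (LinearMap.ker (Qgr (openChain K) Fin.val (g+1))))
          + Module.finrank ℂ (LinearMap.range (Qgr (openChain (K+3)) Fin.val (g+1))) := e2
    have E3 : Module.finrank ℂ ↥(Submodule.map (Il K (g+1))
            (LinearMap.ker (Qgr (openChain K) Fin.val (g+1))))
        = Module.finrank ℂ (LinearMap.ker (Qgr (openChain K) Fin.val (g+1))) := e3
    have E4 : Module.finrank ℂ (Submodule.map (Il K (g+1))
            (LinearMap.range (Qgr (openChain K) Fin.val g)))
        = Module.finrank ℂ (LinearMap.range (Qgr (openChain K) Fin.val g)) := e4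
    have E5 : cohDim (openChain K) Fin.val (g+1)
        + Module.finrank ℂ (LinearMap.range (Qgr (openChain K) Fin.val g))
        = Module.finrank ℂ (LinearMap.ker (Qgr (openChain K) Fin.val (g+1))) := e5
    omega

end OCproof

namespace OCproof

instance TT_zero_unique (L : ℕ) : Unique (TT L 0) where
  default := ⟨∅, fun u hu => absurd hu (Finset.notMem_empty u), Finset.card_empty⟩
  uniq := fun S => Subtype.ext (TT_zero_eq S)

lemma ker_Q0_eq_bot (L : ℕ) (h : 1 ≤ L) :
    LinearMap.ker (Qgr (openChain L) Fin.val 0) = ⊥ := by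
  rw [eq_bot_iff]
  intro x hx
  have hx0 : Qgr (openChain L) Fin.val 0 x = 0 := hx
  set v0 : Fin L := ⟨0, h⟩ with hv0
  set T₁ : TT L 1 := ⟨{v0}, indep_singleton v0, Finset.card_singleton v0⟩ with hT₁
  have hev : (Qgr (openChain L) Fin.val 0 x) T₁ = x default := by
    rw [Qgr_eq, Matrix.toLin'_apply]
    show ∑ S : TT L 0, QM L 0 T₁ S * x S = x default
    rw [Finset.univ_unique, Finset.sum_singleton]
    have hQ : QM L 0 T₁ default = 1 := by
      rw [Q_entry_insert T₁ default (v := v0) (by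
        show v0 ∉ (∅ : Finset (Fin L))
        exact Finset.notMem_empty _) (by
        show T₁.1 = insert v0 (∅ : Finset (Fin L))
        rfl)]
      show sgn (∅ : Finset (Fin L)) v0 = 1
      exact sgn_empty v0
    rw [hQ, one_mul]
  rw [hx0] at hev
  have hxd : x default = 0 := hev.symm
  show x ∈ (⊥ : Submodule ℂ (TT L 0 → ℂ))
  rw [Submodule.mem_bot]
  funext S
  rw [Unique.eq_default S]
  exact hxd

lemma cohDim0_of_ker_bot (L : ℕ) (h : 1 ≤ L) :
    cohDim (openChain L) Fin.val 0 = 0 := by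
  rw [cohDim_zero_eq, ker_Q0_eq_bot L h, finrank_bot]

lemma TT_empty_0 (f : ℕ) : IsEmpty (TT 0 (f+1)) := by
  constructor
  intro S
  have h1 := Finset.card_le_univ S.1
  rw [S.2.2] at h1
  simp at h1

lemma TT_empty_1 (f : ℕ) : IsEmpty (TT 1 (f+2)) := by
  constructor
  intro S
  have h1 := Finset.card_le_univ S.1
  rw [S.2.2] at h1
  simp at h1

lemma TT_empty_2 (f : ℕ) : IsEmpty (TT 2 (f+2)) := by
  constructor
  intro S
  have h1 := Finset.card_le_univ S.1
  rw [S.2.2] at h1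
  simp only [Fintype.card_fin] at h1
  have hf : f = 0 := by omega
  subst hf
  have h2 : S.1 = Finset.univ := (Finset.card_eq_iff_eq_univ _).mp (by rw [S.2.2]; rfl)
  have h0 : (0 : Fin 2) ∈ S.1 := h2 ▸ Finset.mem_univ _
  have h1' : (1 : Fin 2) ∈ S.1 := h2 ▸ Finset.mem_univ _
  exact S.2.1 0 h0 1 h1' (adj_iff.mpr (Or.inl rfl))

lemma cohDim_of_empty (L f : ℕ) (h : IsEmpty (TT L (f+1))) :
    cohDim (openChain L) Fin.val (f+1) = 0 := by
  have hsub : Subsingleton (TT L (f+1) → ℂ) := by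
    constructor
    intro a b
    funext x
    exact (h.false x).elim
  have h1 : Subsingleton (LinearMap.ker (Qgr (openChain L) Fin.val (f+1))) := by
    constructor
    intro a b
    ext
    exact congrFun (Subsingleton.elim a.1 b.1) _
  have h2 := cohDim_succ_add L f
  have h3 : Module.finrank ℂ (LinearMap.ker (Qgr (openChain L) Fin.val (f+1))) = 0 :=
    Module.finrank_zero_of_subsingleton
  omega

lemma ker_eq_top_of_empty {L f : ℕ} (h : IsEmpty (TT L (f+2))) :
    LinearMap.ker (Qgr (openChain L) Fin.val (f+1)) = ⊤ := by
  rw [LinearMap.ker_eq_top]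
  ext x T
  exact (h.false T).elim

lemma card_TT1 (L : ℕ) : Fintype.card (TT L 1) = L := by
  have e : Fin L ≃ TT L 1 := by
    apply Equiv.ofBijective (fun v => ⟨{v}, indep_singleton v, Finset.card_singleton v⟩)
    constructor
    · intro a b h
      have h2 : ({a} : Finset (Fin L)) = {b} := congrArg Subtype.val h
      exact Finset.singleton_injective h2
    · intro S
      obtain ⟨a, ha⟩ := Finset.card_eq_one.mp S.2.2
      exact ⟨a, Subtype.ext ha.symm⟩
  rw [← Fintype.card_congr e, Fintype.card_fin]

lemma finrank_rangeQ0 (L : ℕ) (h : 1 ≤ L) :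
    Module.finrank ℂ (LinearMap.range (Qgr (openChain L) Fin.val 0)) = 1 := by
  have h1 := LinearMap.finrank_range_add_finrank_ker (Qgr (openChain L) Fin.val 0)
  rw [ker_Q0_eq_bot L h, finrank_bot, Module.finrank_pi ℂ, Fintype.card_unique] at h1
  omega

lemma finrank_kerQ1_top (L f : ℕ) (h : IsEmpty (TT L (f+2))) :
    Module.finrank ℂ (LinearMap.ker (Qgr (openChain L) Fin.val (f+1)))
      = Fintype.card (TT L (f+1)) := by
  rw [ker_eq_top_of_empty h, finrank_top, Module.finrank_pi ℂ]

lemma card_TT1' (L : ℕ) : Fintype.card (TT L (0+1)) = L := card_TT1 L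

lemma cohDim_L1_f1 : cohDim (openChain 1) Fin.val 1 = 0 := by
  show cohDim (openChain 1) Fin.val (0+1) = 0
  have e1 := cohDim_succ_add 1 0
  rw [finrank_kerQ1_top 1 0 (TT_empty_1 0), finrank_rangeQ0 1 (by omega), card_TT1' 1] at e1
  omega

lemma cohDim_L2_f1 : cohDim (openChain 2) Fin.val 1 = 1 := by
  show cohDim (openChain 2) Fin.val (0+1) = 1
  have e1 := cohDim_succ_add 2 0
  rw [finrank_kerQ1_top 2 0 (TT_empty_2 0), finrank_rangeQ0 2 (by omega), card_TT1' 2] at e1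
  omega

lemma cohDim_L0_f0 : cohDim (openChain 0) Fin.val 0 = 1 := by
  rw [cohDim_zero_eq]
  have hker : LinearMap.ker (Qgr (openChain 0) Fin.val 0) = ⊤ := by
    rw [LinearMap.ker_eq_top]
    ext x T
    exact ((TT_empty_0 0).false T).elim
  rw [hker, finrank_top, Module.finrank_pi ℂ, Fintype.card_unique]

lemma main (L f : ℕ) :
    cohDim (openChain L) Fin.val f = if 3*f = L ∨ 3*f = L + 1 then 1 else 0 := by
  induction f generalizing L with
  | zero =>
    by_cases hL : L = 0
    · subst hL
      rw [if_pos (show 3*0 = 0 ∨ 3*0 = 0+1 from Or.inl rfl)]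
      exact cohDim_L0_f0
    · rw [if_neg (by omega)]
      exact cohDim0_of_ker_bot L (by omega)
  | succ f ih =>
    match L, (by omega : L = 0 ∨ L = 1 ∨ L = 2 ∨ 3 ≤ L) with
    | 0, _ =>
      rw [cohDim_of_empty 0 f (TT_empty_0 f), if_neg (by omega)]
    | 1, _ =>
      cases f with
      | zero =>
        rw [if_neg (by omega)]
        exact cohDim_L1_f1
      | succ g =>
        rw [cohDim_of_empty 1 (g+1) (TT_empty_1 g), if_neg (by omega)]
    | 2, _ =>
      cases f with
      | zero =>
        rw [if_pos (by omega)]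
        exact cohDim_L2_f1
      | succ g =>
        rw [cohDim_of_empty 2 (g+1) (TT_empty_2 g), if_neg (by omega)]
    | (K+3), _ =>
      rw [step K f, ih K]
      congr 1
      simp only [eq_iff_iff]
      constructor <;> intro h <;> omega

end OCproof

theorem cohomology_open_chain (L n : ℕ) (a : ℤ)
    (ha : a = -1 ∨ a = 0 ∨ a = 1) (hLa : (L : ℤ) = 3 * n + a) :
    (a = 1 → ∀ f : ℕ, cohDim (openChain L) Fin.val f = 0) ∧
    ((a = 0 ∨ a = -1) →
      cohDim (openChain L) Fin.val n = 1 ∧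
      ∀ f : ℕ, f ≠ n → cohDim (openChain L) Fin.val f = 0) := by
  constructor
  · rintro rfl f
    rw [OCproof.main, if_neg (by omega)]
  · rintro (rfl | rfl)
    · exact ⟨by rw [OCproof.main, if_pos (by omega)],
        fun f hf => by rw [OCproof.main, if_neg (by omega)]⟩
    · exact ⟨by rw [OCproof.main, if_pos (by omega)],
        fun f hf => by rw [OCproof.main, if_neg (by omega)]⟩
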